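/- Every Lie algebra of dimension at most 3 over an arbitrary field is zpd. -/

import Mathlib

/-- The linear span of all brackets `⁅x, y⁆` in a Lie algebra `L` over `F`,
i.e. the derived subalgebra `[L, L]` viewed as a subspace. -/
def lieBracketSpan (F L : Type*) [Field F] [LieRing L] [LieAlgebra F L] : Submodule F L :=
  Submodule.span F {z : L | ∃ x y : L, ⁅x, y⁆ = z}

/-- A Lie algebra `L` over a field `F` is zero product determined (zpd) if every bilinear
map `f : L × L → F` vanishing on commuting pairs factors through the bracket via a linear
map `Φ : [L, L] → F`. -/
def IsZPD (F L : Type*) [Field F] [LieRing L] [LieAlgebra F L] : Prop :=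
  ∀ f : L →ₗ[F] L →ₗ[F] F, (∀ x y : L, ⁅x, y⁆ = 0 → f x y = 0) →
    ∃ Φ : lieBracketSpan F L →ₗ[F] F,
      ∀ x y : L, f x y = Φ ⟨⁅x, y⁆, Submodule.subset_span ⟨x, y, rfl⟩⟩

namespace ZPDAux

variable {F : Type*} [Field F]

/-- The "cross product" coordinates: coefficients of `x ∧ y` in the basis
`e₀∧e₁, e₀∧e₂, e₁∧e₂`. -/
def cross (a b : Fin 3 → F) : Fin 3 → F :=
  ![a 0 * b 1 - a 1 * b 0, a 0 * b 2 - a 2 * b 0, a 1 * b 2 - a 2 * b 1]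

/-- Every element of `F³` is a cross product: every element of `Λ² F³` is decomposable. -/
theorem exists_cross (t : Fin 3 → F) : ∃ a b : Fin 3 → F, cross a b = t := by
  by_cases h0 : t 0 = 0
  · refine ⟨![t 1, t 2, 0], ![0, 0, 1], ?_⟩
    funext k
    fin_cases k <;> simp [cross, h0]
  · refine ⟨![t 0, 0, -(t 2)], ![0, 1, t 1 / t 0], ?_⟩
    funext k
    fin_cases k
    · simp [cross]
    · simp only [cross, Matrix.cons_val_one, Matrix.head_cons, Matrix.cons_val_zero,
        Matrix.cons_val_two, Matrix.tail_cons, Fin.mk_one]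
      field_simp
      ring
    · simp [cross]

variable {L M : Type*} [AddCommGroup L] [Module F L] [AddCommGroup M] [Module F M]

theorem bilin_antisymm (B : L →ₗ[F] L →ₗ[F] M) (hB : ∀ z, B z z = 0) (x y : L) :
    B y x = - B x y := by
  have h := hB (x + y)
  simp only [map_add, LinearMap.add_apply, hB x, hB y] at h
  rw [eq_neg_iff_add_eq_zero]
  rw [zero_add, add_zero] at h
  linear_combination (norm := abel) h

/-- Expansion of a bilinear map vanishing on the diagonal, with respect to a family of
three vectors, in terms of the cross product of the coordinates. -/
theorem bilin_expand (B : L →ₗ[F] L →ₗ[F] M) (hB : ∀ z, B z z = 0) (e : Fin 3 → L)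
    (a b : Fin 3 → F) :
    B (∑ i, a i • e i) (∑ i, b i • e i) =
      cross a b 0 • B (e 0) (e 1) + cross a b 1 • B (e 0) (e 2)
        + cross a b 2 • B (e 1) (e 2) := by
  simp only [map_sum, map_smul, map_add, LinearMap.sum_apply, LinearMap.smul_apply, LinearMap.add_apply,
    Fin.sum_univ_three, hB, bilin_antisymm B hB (e 0) (e 1),
    bilin_antisymm B hB (e 0) (e 2), bilin_antisymm B hB (e 1) (e 2), cross]
  simp only [Matrix.cons_val_zero, Matrix.cons_val_one, Matrix.head_cons,
    Matrix.cons_val_two, Matrix.tail_cons]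
  module

end ZPDAux

/-- every Lie algebra of dimension at most `3` over an arbitrary field is
zpd. -/
theorem isZPD_of_rank_le_three (F L : Type*) [Field F] [LieRing L] [LieAlgebra F L]
    (h : Module.rank F L ≤ 3) :
    IsZPD F L := by
  classical
  intro f hf
  -- finite dimensionality and a spanning family of three vectors
  have hfin : Module.Finite F L := by
    rw [← Module.rank_lt_aleph0_iff]
    exact h.trans_lt (Cardinal.nat_lt_aleph0 3)
  have hle : Module.finrank F L ≤ 3 := Module.finrank_le_of_rank_le h
  let bb := Module.finBasis F L
  set n := Module.finrank F L with hn
  let e : Fin 3 → L := fun i => if hi : (i : ℕ) < n then bb ⟨i, hi⟩ else 0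
  have hspan : ∀ x : L, ∃ a : Fin 3 → F, ∑ i, a i • e i = x := by
    intro x
    rw [← Submodule.mem_span_range_iff_exists_fun F]
    have : Set.range bb ⊆ Set.range e := by
      rintro _ ⟨j, rfl⟩
      exact ⟨Fin.castLE hle j, by simp [e, j.2]⟩
    have := Submodule.span_mono (R := F) this
    rw [bb.span_eq] at this
    exact this trivial
  -- the bracket as a bilinear map
  let B : L →ₗ[F] L →ₗ[F] L := LinearMap.mk₂ F (fun x y => ⁅x, y⁆)
    (fun x y z => add_lie x y z) (fun c x y => smul_lie c x y)
    (fun x y z => lie_add x y z) (fun c x y => lie_smul c x y)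
  have hB : ∀ z : L, B z z = 0 := fun z => lie_self z
  have hf0 : ∀ z : L, f z z = 0 := fun z => hf z z (lie_self z)
  -- the two linear maps from F³
  let v : Fin 3 → L := ![⁅e 0, e 1⁆, ⁅e 0, e 2⁆, ⁅e 1, e 2⁆]
  let c : Fin 3 → F := ![f (e 0) (e 1), f (e 0) (e 2), f (e 1) (e 2)]
  let g : (Fin 3 → F) →ₗ[F] L := Fintype.linearCombination F v
  let hm : (Fin 3 → F) →ₗ[F] F := Fintype.linearCombination F c
  have hg : ∀ t, g t = t 0 • ⁅e 0, e 1⁆ + t 1 • ⁅e 0, e 2⁆ + t 2 • ⁅e 1, e 2⁆ := by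
    intro t
    simp [g, v, Fintype.linearCombination_apply, Fin.sum_univ_three, add_assoc]
  have hh : ∀ t, hm t = t 0 • f (e 0) (e 1) + t 1 • f (e 0) (e 2) + t 2 • f (e 1) (e 2) := by
    intro t
    simp [hm, c, Fintype.linearCombination_apply, Fin.sum_univ_three, add_assoc]
  -- bracket and f of arbitrary elements
  have hbr : ∀ a b : Fin 3 → F,
      ⁅∑ i, a i • e i, ∑ i, b i • e i⁆ = g (ZPDAux.cross a b) := by
    intro a b
    have := ZPDAux.bilin_expand B hB e a b
    simp only [B, LinearMap.mk₂_apply] at this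
    rw [this, hg]
  have hfv : ∀ a b : Fin 3 → F,
      f (∑ i, a i • e i) (∑ i, b i • e i) = hm (ZPDAux.cross a b) := by
    intro a b
    rw [ZPDAux.bilin_expand f hf0 e a b, hh]
  -- ker g ≤ ker hm
  have hker : LinearMap.ker g ≤ LinearMap.ker hm := by
    intro t ht
    rw [LinearMap.mem_ker] at ht ⊢
    obtain ⟨a, b, rfl⟩ := ZPDAux.exists_cross t
    rw [← hfv a b]
    exact hf _ _ (by rw [hbr a b, ht])
  -- range g = lieBracketSpan
  have hrange : LinearMap.range g = lieBracketSpan F L := by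
    apply le_antisymm
    · rintro _ ⟨t, rfl⟩
      rw [hg]
      refine Submodule.add_mem _ (Submodule.add_mem _ ?_ ?_) ?_ <;>
        exact Submodule.smul_mem _ _ (Submodule.subset_span ⟨_, _, rfl⟩)
    · rw [lieBracketSpan, Submodule.span_le]
      rintro _ ⟨x, y, rfl⟩
      obtain ⟨a, hax⟩ := hspan x
      obtain ⟨b, hby⟩ := hspan y
      exact ⟨ZPDAux.cross a b, by rw [← hax, ← hby, hbr a b]⟩
  -- factor hm through range g
  let Φ₀ : LinearMap.range g →ₗ[F] F :=
    ((LinearMap.ker g).liftQ hm hker).comp g.quotKerEquivRange.symm.toLinearMap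
  have hΦ₀ : ∀ t : Fin 3 → F, Φ₀ ⟨g t, LinearMap.mem_range_self g t⟩ = hm t := by
    intro t
    have h1 : g.quotKerEquivRange.symm ⟨g t, LinearMap.mem_range_self g t⟩ =
        Submodule.Quotient.mk t := by
      apply g.quotKerEquivRange.injective
      rw [LinearEquiv.apply_symm_apply]
      exact Subtype.ext (LinearMap.quotKerEquivRange_apply_mk g t).symm
    simp only [Φ₀, LinearMap.comp_apply, LinearEquiv.coe_toLinearMap, h1,
      Submodule.liftQ_apply]
  refine ⟨Φ₀.comp (LinearEquiv.ofEq _ _ hrange.symm).toLinearMap, ?_⟩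
  intro x y
  obtain ⟨a, hax⟩ := hspan x
  obtain ⟨b, hby⟩ := hspan y
  have hxy : ⁅x, y⁆ = g (ZPDAux.cross a b) := by rw [← hax, ← hby, hbr a b]
  have hfxy : f x y = hm (ZPDAux.cross a b) := by rw [← hax, ← hby, hfv a b]
  have harg : (LinearEquiv.ofEq _ _ hrange.symm)
      (⟨⁅x, y⁆, Submodule.subset_span ⟨x, y, rfl⟩⟩ : lieBracketSpan F L)
      = ⟨g (ZPDAux.cross a b), LinearMap.mem_range_self g _⟩ :=
    Subtype.ext (by rw [LinearEquiv.coe_ofEq_apply]; exact hxy)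
  simp only [LinearMap.comp_apply, LinearEquiv.coe_toLinearMap, harg]
  exact hfxy.trans (hΦ₀ _).symm
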